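/- Suppose Ω ⊆ ℙ(ℂ^{d+1}) is a proper linearly convex open set. If sequences (p_n), (q_n) in Ω satisfy p_n → x ∈ ∂Ω, q_n → y ∈ ∂Ω, and d_Ω(p_n, q_n) < R for all n and some R > 0, then every complex projective hyperplane H with x ∈ H and H ∩ Ω = ∅ also contains y. -/

import Mathlib

open scoped LinearAlgebra.Projectivization MatrixGroups
open Projectivization

noncomputable section
namespace ComplexConvex

/-! ### Complex projective space and `PSL(d+1, ℂ)` -/

/-- The underlying vector space `ℂ^{d+1}`. -/
abbrev Vd (d : ℕ) : Type := Fin (d + 1) → ℂ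

/-- Complex projective space `ℙ(ℂ^{d+1})`. -/
abbrev CP (d : ℕ) : Type := ℙ ℂ (Vd d)

instance (d : ℕ) : TopologicalSpace (CP d) := instTopologicalSpaceQuotient

abbrev SLd (d : ℕ) : Type := Matrix.SpecialLinearGroup (Fin (d + 1)) ℂ

instance (d : ℕ) : TopologicalSpace (SLd d) :=
  TopologicalSpace.induced (fun g => (g : Matrix (Fin (d + 1)) (Fin (d + 1)) ℂ)) inferInstance

/-- `PSL(d+1, ℂ)`, the quotient of `SL(d+1, ℂ)` by its center. -/
abbrev PSLd (d : ℕ) : Type := Matrix.ProjectiveSpecialLinearGroup (Fin (d + 1)) ℂ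

/-- The projective transformation of `ℙ(ℂ^{d+1})` induced by an element of `SL(d+1,ℂ)`. -/
def slEquiv {d : ℕ} (g : SLd d) : Equiv.Perm (CP d) where
  toFun := Projectivization.map (Matrix.SpecialLinearGroup.toLin' g).toLinearMap
      (Matrix.SpecialLinearGroup.toLin' g).injective
  invFun := Projectivization.map (Matrix.SpecialLinearGroup.toLin' g).symm.toLinearMap
      (Matrix.SpecialLinearGroup.toLin' g).symm.injective
  left_inv := by
    intro x
    induction x using Projectivization.ind with
    | h v hv => rw [Projectivization.map_mk, Projectivization.map_mk]; simp
  right_inv := by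
    intro x
    induction x using Projectivization.ind with
    | h v hv => rw [Projectivization.map_mk, Projectivization.map_mk]; simp

/-- The action of `SL(d+1,ℂ)` on `ℙ(ℂ^{d+1})`, as a homomorphism into permutations. -/
def slPerm (d : ℕ) : SLd d →* Equiv.Perm (CP d) where
  toFun := slEquiv
  map_one' := by
    ext x
    induction x using Projectivization.ind with
    | h v hv =>
      simp only [slEquiv, Equiv.coe_fn_mk, Equiv.Perm.coe_one, id_eq]
      rw [Projectivization.map_mk]
      simp
  map_mul' g h := by
    ext x
    induction x using Projectivization.ind with
    | h v hv =>
      simp only [slEquiv, Equiv.coe_fn_mk, Equiv.Perm.mul_apply]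
      rw [Projectivization.map_mk, Projectivization.map_mk, Projectivization.map_mk]
      simp

/-- The action of `PSL(d+1,ℂ)` on `ℙ(ℂ^{d+1})`. -/
def pslPerm (d : ℕ) : PSLd d →* Equiv.Perm (CP d) :=
  QuotientGroup.lift _ (slPerm d) (by
    intro g hg
    obtain ⟨r, hr, hscalar⟩ := Matrix.SpecialLinearGroup.mem_center_iff.mp hg
    have hr0 : r ≠ 0 := by
      intro h
      rw [h] at hr
      simp at hr
    ext x
    induction x using Projectivization.ind with
    | h v hv =>
      simp only [slPerm, slEquiv, MonoidHom.coe_mk, OneHom.coe_mk, Equiv.coe_fn_mk,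
        Equiv.Perm.coe_one, id_eq]
      rw [Projectivization.map_mk]
      have hval : (Matrix.SpecialLinearGroup.toLin' g).toLinearMap v = r • v := by
        show Matrix.SpecialLinearGroup.toLin' g v = r • v
        rw [Matrix.SpecialLinearGroup.toLin'_apply, Matrix.toLin'_apply, ← hscalar,
          Matrix.scalar_apply]
        funext i
        simp [Matrix.mulVec_diagonal, Pi.smul_apply, smul_eq_mul]
      rw [Projectivization.mk_eq_mk_iff]
      exact ⟨Units.mk0 r hr0, by simp [hval]⟩)

/-! ### Projective subspaces and convexity notions -/

/-- The projective subspace associated with a linear subspace. -/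
def projSet {d : ℕ} (W : Submodule ℂ (Vd d)) : Set (CP d) :=
  {x : CP d | x.submodule ≤ W}

/-- A complex projective line: the projectivization of a 2-dimensional subspace. -/
def IsProjLine {d : ℕ} (L : Set (CP d)) : Prop :=
  ∃ W : Submodule ℂ (Vd d), Module.finrank ℂ W = 2 ∧ L = projSet W

/-- A complex projective hyperplane: the projectivization of a `d`-dimensional subspace. -/
def IsProjHyperplane {d : ℕ} (H : Set (CP d)) : Prop :=
  ∃ W : Submodule ℂ (Vd d), Module.finrank ℂ W = d ∧ H = projSet W

/-- `Ω` is `ℂ`-convex: its intersection with every complex projective line, and the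
complement of this intersection in the line, are connected. -/
def CConvex {d : ℕ} (Ω : Set (CP d)) : Prop :=
  ∀ L : Set (CP d), IsProjLine L → IsPreconnected (L ∩ Ω) ∧ IsPreconnected (L \ Ω)

/-- `Ω` is proper: its closure contains no complex projective line. -/
def IsProperDomain {d : ℕ} (Ω : Set (CP d)) : Prop :=
  ∀ L : Set (CP d), IsProjLine L → ¬ L ⊆ closure Ω

/-- `Ω` is linearly convex: every point of the complement lies on a complex hyperplane
missing `Ω`. -/
def LinearlyConvex {d : ℕ} (Ω : Set (CP d)) : Prop :=
  ∀ p ∈ (Set.univ : Set (CP d)) \ Ω, ∃ H : Set (CP d),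
    IsProjHyperplane H ∧ p ∈ H ∧ H ∩ Ω = ∅

/-- `Ω` is weakly linearly convex: every boundary point lies on a complex hyperplane
missing `Ω`. -/
def WeaklyLinearlyConvex {d : ℕ} (Ω : Set (CP d)) : Prop :=
  ∀ p ∈ frontier Ω, ∃ H : Set (CP d), IsProjHyperplane H ∧ p ∈ H ∧ H ∩ Ω = ∅

/-- `H` is a complex tangent hyperplane of `Ω` at the boundary point `p`. -/
def IsTangentHyperplaneAt {d : ℕ} (Ω H : Set (CP d)) (p : CP d) : Prop :=
  IsProjHyperplane H ∧ p ∈ frontier Ω ∧ p ∈ H ∧ H ∩ Ω = ∅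

/-- `Ω` is strictly `ℂ`-convex: every complex tangent hyperplane of `Ω` meets the boundary
at exactly one point. -/
def StrictlyCConvex {d : ℕ} (Ω : Set (CP d)) : Prop :=
  ∀ (H : Set (CP d)) (p : CP d), IsTangentHyperplaneAt Ω H p → H ∩ frontier Ω = {p}

/-! ### `C^k` boundaries and projective balls -/

/-- A point lies in the affine chart associated to the linear automorphism `A`. -/
def InChart {d : ℕ} (A : Vd d ≃ₗ[ℂ] Vd d) (x : CP d) : Prop :=
  A x.rep 0 ≠ 0

/-- The affine coordinates of a point in the affine chart associated to `A`. -/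
def chartMap {d : ℕ} (A : Vd d ≃ₗ[ℂ] Vd d) (x : CP d) : Fin d → ℂ :=
  fun i => A x.rep i.succ / A x.rep 0

/-- `Ω` has `C^k` boundary: near every boundary point, in some affine chart, the boundary
is the regular zero set of a real-valued `C^k` function. -/
def HasCkBoundary {d : ℕ} (k : WithTop ℕ∞) (Ω : Set (CP d)) : Prop :=
  ∀ x ∈ frontier Ω, ∃ A : Vd d ≃ₗ[ℂ] Vd d, InChart A x ∧
    ∃ (U : Set (Fin d → ℂ)) (F : (Fin d → ℂ) → ℝ),
      IsOpen U ∧ chartMap A x ∈ U ∧ ContDiffOn ℝ k F U ∧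
      (∀ u ∈ U, fderivWithin ℝ F U u ≠ 0) ∧
      (∀ y : CP d, InChart A y → chartMap A y ∈ U → (y ∈ frontier Ω ↔ F (chartMap A y) = 0))

/-- `Ω` is a projective ball: in suitable homogeneous coordinates it is
`{[1 : z₁ : ⋯ : z_d] : ∑ |zᵢ|² < 1}`. -/
def IsProjBall {d : ℕ} (Ω : Set (CP d)) : Prop :=
  ∃ b : Module.Basis (Fin (d + 1)) ℂ (Vd d),
    Ω = {x : CP d | b.repr x.rep 0 ≠ 0 ∧
      ∑ i : Fin d, ‖b.repr x.rep i.succ / b.repr x.rep 0‖ ^ 2 < 1}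

/-! ### Automorphisms, dividing groups -/

/-- The group of projective automorphisms of `Ω`, as a subgroup of `PSL(d+1,ℂ)`. -/
def Aut {d : ℕ} (Ω : Set (CP d)) : Subgroup (PSLd d) where
  carrier := {φ : PSLd d | pslPerm d φ '' Ω = Ω}
  one_mem' := by simp
  mul_mem' := by
    intro a b ha hb
    simp only [Set.mem_setOf_eq] at ha hb ⊢
    have h : ⇑(pslPerm d (a * b)) = ⇑(pslPerm d a) ∘ ⇑(pslPerm d b) := by
      rw [map_mul]; rfl
    rw [h, Set.image_comp, hb, ha]
  inv_mem' := by
    intro a ha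
    simp only [Set.mem_setOf_eq] at ha ⊢
    have h : ⇑(pslPerm d a⁻¹) ∘ ⇑(pslPerm d a) = id := by
      funext x
      rw [map_inv]
      exact Equiv.symm_apply_apply (pslPerm d a) x
    calc pslPerm d a⁻¹ '' Ω = pslPerm d a⁻¹ '' (pslPerm d a '' Ω) := by rw [ha]
      _ = (⇑(pslPerm d a⁻¹) ∘ ⇑(pslPerm d a)) '' Ω := by rw [Set.image_comp]
      _ = Ω := by rw [h, Set.image_id]

/-- `φ` belongs to the identity component `Aut₀(Ω)` of `Aut(Ω)`. -/
def InAut0 {d : ℕ} (Ω : Set (CP d)) (φ : PSLd d) : Prop :=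
  ∃ h : φ ∈ Aut Ω, (⟨φ, h⟩ : Aut Ω) ∈ connectedComponent (1 : Aut Ω)

/-- A subgroup `Γ ≤ PSL(d+1,ℂ)` divides `Ω`: it preserves `Ω` and `Γ ⬝ K = Ω` for some
compact `K ⊆ Ω`. -/
def Divides {d : ℕ} (Γ : Subgroup (PSLd d)) (Ω : Set (CP d)) : Prop :=
  (∀ γ ∈ Γ, pslPerm d γ '' Ω = Ω) ∧
    ∃ K : Set (CP d), K ⊆ Ω ∧ IsCompact K ∧ (⋃ γ ∈ Γ, pslPerm d γ '' K) = Ω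

/-- `Ω` is divisible: some discrete subgroup of `PSL(d+1,ℂ)` divides it. -/
def Divisible {d : ℕ} (Ω : Set (CP d)) : Prop :=
  ∃ Γ : Subgroup (PSLd d), DiscreteTopology Γ ∧ Divides Γ Ω

/-- A subgroup is torsion free. -/
def TorsionFree {d : ℕ} (Γ : Subgroup (PSLd d)) : Prop :=
  ∀ γ ∈ Γ, γ ≠ 1 → ∀ n : ℕ, 0 < n → γ ^ n ≠ 1

/-! ### The Hilbert metric -/

/-- The projectivization of the dual space. -/
abbrev DualP (d : ℕ) : Type := ℙ ℂ (Module.Dual ℂ (Vd d))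

/-- The complex dual `Ω*` of `Ω`. -/
def dualSet {d : ℕ} (Ω : Set (CP d)) : Set (DualP d) :=
  {f : DualP d | ∀ x ∈ Ω, f.rep (Projectivization.rep x) ≠ 0}

/-- The Hilbert (Dubois) metric of a proper linearly convex set. -/
def hilbertDist {d : ℕ} (Ω : Set (CP d)) (v w : CP d) : ℝ :=
  sSup {r : ℝ | ∃ f ∈ dualSet Ω, ∃ g ∈ dualSet Ω,
    r = Real.log ((‖f.rep v.rep‖ * ‖g.rep w.rep‖) /
        (‖f.rep w.rep‖ * ‖g.rep v.rep‖))}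

/-! ### Eigenvalues, proximality -/

/-- The ordered list of moduli of the eigenvalues (with multiplicity) of a matrix. -/
def eigMods {d : ℕ} (g : Matrix (Fin (d + 1)) (Fin (d + 1)) ℂ) : List ℝ :=
  ((g.charpoly.roots).map (fun z : ℂ => ‖z‖)).sort (· ≤ ·)

/-- `σ_i(g)` for `i = 1, …, d+1`: the `i`-th smallest modulus of an eigenvalue of `g`. -/
def sigma' {d : ℕ} (g : Matrix (Fin (d + 1)) (Fin (d + 1)) ℂ) (i : ℕ) : ℝ :=
  (eigMods g).getD (i - 1) 0

/-- An element of `PSL(d+1,ℂ)` is proximal if `σ_d < σ_{d+1}` (for any lift, the property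
being independent of the lift). -/
def IsProximal {d : ℕ} (φ : PSLd d) : Prop :=
  ∀ g : SLd d, (QuotientGroup.mk g : PSLd d) = φ →
    sigma' (g : Matrix (Fin (d + 1)) (Fin (d + 1)) ℂ) d <
      sigma' (g : Matrix (Fin (d + 1)) (Fin (d + 1)) ℂ) (d + 1)

/-- Bi-proximal elements: `φ` and `φ⁻¹` are proximal. -/
def IsBiProximal {d : ℕ} (φ : PSLd d) : Prop :=
  IsProximal φ ∧ IsProximal φ⁻¹

/-- Almost unipotent elements: all eigenvalue moduli equal `1`. -/
def IsAlmostUnipotent {d : ℕ} (φ : PSLd d) : Prop :=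
  ∀ g : SLd d, (QuotientGroup.mk g : PSLd d) = φ →
    ∀ r ∈ eigMods (g : Matrix (Fin (d + 1)) (Fin (d + 1)) ℂ), r = 1

/-- `x` is the attracting fixed point `x⁺_φ`: an eigenline for an eigenvalue of modulus
`σ_{d+1}`. -/
def IsAttractingPoint {d : ℕ} (φ : PSLd d) (x : CP d) : Prop :=
  ∀ g : SLd d, (QuotientGroup.mk g : PSLd d) = φ →
    ∃ μ : ℂ, ‖μ‖ = sigma' (g : Matrix (Fin (d + 1)) (Fin (d + 1)) ℂ) (d + 1) ∧
      (g : Matrix (Fin (d + 1)) (Fin (d + 1)) ℂ).mulVec x.rep = μ • x.rep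

/-- `x` is the repelling fixed point `x⁻_φ`: an eigenline for an eigenvalue of modulus
`σ_1`. -/
def IsRepellingPoint {d : ℕ} (φ : PSLd d) (x : CP d) : Prop :=
  ∀ g : SLd d, (QuotientGroup.mk g : PSLd d) = φ →
    ∃ μ : ℂ, ‖μ‖ = sigma' (g : Matrix (Fin (d + 1)) (Fin (d + 1)) ℂ) 1 ∧
      (g : Matrix (Fin (d + 1)) (Fin (d + 1)) ℂ).mulVec x.rep = μ • x.rep

/-- The operator norm of a matrix with respect to the standard Hermitian norm on
`ℂ^{d+1}`. -/
def opNorm {d : ℕ} (g : Matrix (Fin (d + 1)) (Fin (d + 1)) ℂ) : ℝ :=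
  ‖Matrix.toEuclideanCLM (𝕜 := ℂ) g‖

/-! ### Quasi-isometries, word metrics, the Apollonian metric -/

/-- `f` is an `(A,B)`-quasi-isometric embedding with respect to the distance functions
`dX` and `dY`. -/
def IsQIEmbedding {X Y : Type*} (dX : X → X → ℝ) (dY : Y → Y → ℝ)
    (A B : ℝ) (f : X → Y) : Prop :=
  ∀ x₁ x₂ : X, (1 / A) * dX x₁ x₂ - B ≤ dY (f x₁) (f x₂) ∧
    dY (f x₁) (f x₂) ≤ A * dX x₁ x₂ + B

/-- `f` is an `(A,B)`-quasi-isometry. -/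
def IsQuasiIsometry {X Y : Type*} (dX : X → X → ℝ) (dY : Y → Y → ℝ)
    (A B : ℝ) (f : X → Y) : Prop :=
  IsQIEmbedding dX dY A B f ∧ ∃ R > 0, ∀ y : Y, ∃ x : X, dY y (f x) ≤ R

/-- `(X, dX)` is a quasi-geodesic space: for some `(A,B)`, any two points lie on the image
of an `(A,B)`-quasi-geodesic segment (an `(A,B)`-quasi-isometric embedding of a finite
integer interval with its standard metric). -/
def IsQuasiGeodesicSpace {X : Type*} (dX : X → X → ℝ) : Prop :=
  ∃ A B : ℝ, 0 < A ∧ ∀ x y : X, ∃ (N : ℕ) (f : Fin N → X),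
    (∃ i : Fin N, f i = x) ∧ (∃ j : Fin N, f j = y) ∧
    IsQIEmbedding (fun m n : Fin N => |(m : ℝ) - (n : ℝ)|) dX A B f

/-- The word metric on a group with respect to a generating set `S`. -/
def wordDist {Γ : Type*} [Group Γ] (S : Set Γ) (γ₁ γ₂ : Γ) : ℝ :=
  sInf {r : ℝ | ∃ l : List Γ, (∀ s ∈ l, s ∈ S ∪ S⁻¹) ∧ l.prod = γ₂⁻¹ * γ₁ ∧
    r = l.length}

/-- The Apollonian metric of a bounded set `Ω ⊆ ℂ`, the supremum being taken over
`b₁, b₂ ∈ (ℂ ∪ {∞}) ∖ Ω` with the convention `|z−∞|/|w−∞| = 1` (the terms where `b₁`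
and/or `b₂` equal `∞` are listed separately). -/
def apollonianDist (Ω : Set ℂ) (z w : ℂ) : ℝ :=
  sSup ({(0 : ℝ)} ∪
    {r : ℝ | ∃ b ∈ Ωᶜ, r = Real.log (dist z b / dist w b)} ∪
    {r : ℝ | ∃ b ∈ Ωᶜ, r = Real.log (dist w b / dist z b)} ∪
    {r : ℝ | ∃ b₁ ∈ Ωᶜ, ∃ b₂ ∈ Ωᶜ,
      r = Real.log ((dist z b₁ * dist w b₂) / (dist w b₁ * dist z b₂))})

/-- A `C¹` embedding of the circle into `ℂ`, parameterized `2π`-periodically by `ℝ`. -/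
def IsC1CircleEmbedding (f : ℝ → ℂ) : Prop :=
  ContDiff ℝ 1 f ∧ Function.Periodic f (2 * Real.pi) ∧
    Set.InjOn f (Set.Ico 0 (2 * Real.pi)) ∧ ∀ θ : ℝ, deriv f θ ≠ 0

/-- `Ω` is the bounded open set bounded by the image of the circle embedding `f`. -/
def IsInteriorDomainOf (f : ℝ → ℂ) (Ω : Set ℂ) : Prop :=
  IsOpen Ω ∧ Bornology.IsBounded Ω ∧ IsConnected Ω ∧
    frontier Ω = Set.range f ∧ Ω ∩ Set.range f = ∅


/-! ### Auxiliary material for Statement 11 -/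

section Aux11

variable {d : ℕ}

/-- The bilinear pairing `a, v ↦ ∑ i, v i * a i`. -/
def dotF (a v : Vd d) : ℂ := ∑ i, v i * a i

lemma dotF_smul_right (a : Vd d) (c : ℂ) (v : Vd d) :
    dotF a (c • v) = c * dotF a v := by
  simp [dotF, Finset.mul_sum, mul_assoc]

lemma dotF_add_right (a v w : Vd d) :
    dotF a (v + w) = dotF a v + dotF a w := by
  simp [dotF, add_mul, Finset.sum_add_distrib]

lemma dotF_smul_left (c : ℂ) (a v : Vd d) :
    dotF (c • a) v = c * dotF a v := by
  simp only [dotF, Finset.mul_sum]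
  refine Finset.sum_congr rfl fun i _ => ?_
  simp [mul_comm, mul_assoc, mul_left_comm]

lemma continuous_dotF (v : Vd d) : Continuous fun a : Vd d => dotF a v := by
  refine continuous_finset_sum _ fun i _ => ?_
  exact continuous_const.mul ((continuous_apply i))

/-- Every linear functional is given by pairing against a vector. -/
lemma dual_eq_dotF (ψ : Module.Dual ℂ (Vd d)) (v : Vd d) :
    ψ v = dotF (fun i => ψ (Pi.single i 1)) v := by
  conv_lhs => rw [show v = ∑ i, Pi.single i (v i) from (Finset.univ_sum_single v).symm]
  rw [map_sum, dotF]
  refine Finset.sum_congr rfl fun i _ => ?_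
  have hs : Pi.single (M := fun _ : Fin (d + 1) => ℂ) i (v i)
      = (v i) • Pi.single (M := fun _ : Fin (d + 1) => ℂ) i (1 : ℂ) := by
    rw [← Pi.single_smul, smul_eq_mul, mul_one]
  rw [hs, map_smul, smul_eq_mul]

lemma dotF_star_self_ne_zero {a : Vd d} (ha : a ≠ 0) : dotF a (star a) ≠ 0 := by
  have h : dotF a (star a) = ((∑ i, Complex.normSq (a i) : ℝ) : ℂ) := by
    rw [dotF]
    push_cast
    refine Finset.sum_congr rfl fun i _ => ?_
    simp [Pi.star_apply, Complex.normSq_eq_conj_mul_self]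
  rw [h]
  have hi : ∃ i, a i ≠ 0 := by
    by_contra hcon
    push_neg at hcon
    exact ha (funext hcon)
  obtain ⟨i, hi⟩ := hi
  have hpos : 0 < ∑ i, Complex.normSq (a i) := by
    refine Finset.sum_pos' (fun j _ => Complex.normSq_nonneg _) ⟨i, Finset.mem_univ i, ?_⟩
    simpa [Complex.normSq_pos] using hi
  exact_mod_cast ne_of_gt (by exact_mod_cast hpos)

/-- Limits of functionals (given by vectors) nonvanishing on an open `Ω` are still
nonvanishing at points of `Ω`. -/
lemma dotF_ne_zero_of_mem_closure {Ω : Set (CP d)} (hΩopen : IsOpen Ω)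
    {z : CP d} (hz : z ∈ Ω) {a : Vd d} (ha : a ≠ 0)
    (hacl : a ∈ closure {b : Vd d | ∀ w ∈ Ω, dotF b w.rep ≠ 0}) :
    dotF a z.rep ≠ 0 := by
  by_contra h0
  obtain ⟨b, hbmem, hblim⟩ := mem_closure_iff_seq_limit.1 hacl
  set u : Vd d := star a with hu
  have hau : dotF a u ≠ 0 := dotF_star_self_ne_zero ha
  set t : ℕ → ℂ := fun n => -(dotF (b n) z.rep / dotF (b n) u) with ht
  have hz0 : Filter.Tendsto (fun n => dotF (b n) z.rep) Filter.atTop (nhds 0) := by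
    have := ((continuous_dotF (d := d) z.rep).tendsto a).comp hblim
    rwa [h0] at this
  have hu0 : Filter.Tendsto (fun n => dotF (b n) u) Filter.atTop (nhds (dotF a u)) :=
    ((continuous_dotF (d := d) u).tendsto a).comp hblim
  have htlim : Filter.Tendsto t Filter.atTop (nhds 0) := by
    have := (hz0.div hu0 hau).neg
    simpa using this
  set vec : ℕ → Vd d := fun n => z.rep + t n • u with hvec
  have hveclim : Filter.Tendsto vec Filter.atTop (nhds z.rep) := by
    have h1 : Filter.Tendsto (fun n => t n • u) Filter.atTop (nhds ((0 : ℂ) • u)) :=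
      htlim.smul tendsto_const_nhds
    have := (tendsto_const_nhds (x := z.rep) (f := Filter.atTop (α := ℕ))).add h1
    simpa using this
  -- the preimage of Ω in the subtype of nonzero vectors is open
  have hpre : IsOpen ((fun v : {v : Vd d // v ≠ 0} => Projectivization.mk' ℂ v) ⁻¹' Ω) := by
    exact hΩopen.preimage continuous_quotient_mk'
  obtain ⟨U, hUopen, hUeq⟩ := isOpen_induced_iff.1 hpre
  have hzU : z.rep ∈ U := by
    have : (⟨z.rep, z.rep_nonzero⟩ : {v : Vd d // v ≠ 0}) ∈
        (fun v : {v : Vd d // v ≠ 0} => Projectivization.mk' ℂ v) ⁻¹' Ω := by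
      simp only [Set.mem_preimage, Projectivization.mk'_eq_mk, Projectivization.mk_rep]
      exact hz
    rw [← hUeq] at this
    exact this
  have hev1 : ∀ᶠ n in Filter.atTop, vec n ∈ U := hveclim (hUopen.mem_nhds hzU)
  have hev2 : ∀ᶠ n in Filter.atTop, vec n ≠ 0 := by
    have : ∀ᶠ n in Filter.atTop, vec n ∈ {v : Vd d | v ≠ 0} :=
      hveclim ((isOpen_compl_singleton).mem_nhds z.rep_nonzero)
    exact this
  have hev3 : ∀ᶠ n in Filter.atTop, dotF (b n) u ≠ 0 :=
    hu0 ((isOpen_compl_singleton).mem_nhds hau)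
  obtain ⟨n, h1, h2⟩ := (hev1.and (hev2.and hev3)).exists
  have hnU := h1
  have hnne := h2.1
  have hnd := h2.2
  -- the projective point of `vec n` lies in Ω
  have hmem : Projectivization.mk ℂ (vec n) hnne ∈ Ω := by
    have : (⟨vec n, hnne⟩ : {v : Vd d // v ≠ 0}) ∈
        (fun v : {v : Vd d // v ≠ 0} => Projectivization.mk' ℂ v) ⁻¹' Ω := by
      rw [← hUeq]; exact hnU
    simpa using this
  -- but `b n` pairs to zero against it
  obtain ⟨c, hc⟩ := Projectivization.exists_smul_eq_mk_rep ℂ (vec n) hnne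
  have hzero : dotF (b n) (Projectivization.mk ℂ (vec n) hnne).rep = 0 := by
    rw [← hc, Units.smul_def, dotF_smul_right, hvec]
    have : dotF (b n) (z.rep + t n • u) = 0 := by
      rw [dotF_add_right, dotF_smul_right, ht]
      field_simp
      ring
    rw [this, mul_zero]
  exact hbmem n _ hmem hzero

/-- Uniform comparison of functionals in the dual of `Ω` at two points of `Ω`. -/
lemma dual_ratio_bound {Ω : Set (CP d)} (hΩopen : IsOpen Ω)
    {v w : CP d} (hv : v ∈ Ω) (hw : w ∈ Ω) :
    ∃ M : ℝ, 1 ≤ M ∧ ∀ ψ : Module.Dual ℂ (Vd d), ψ ≠ 0 →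
      (∀ z ∈ Ω, ψ z.rep ≠ 0) →
      ‖ψ v.rep‖ ≤ M * ‖ψ w.rep‖ := by
  classical
  haveI : ProperSpace (Vd d) := FiniteDimensional.proper ℂ (Vd d)
  set K₀ : Set (Vd d) := {a | ‖a‖ = 1 ∧ ∀ z ∈ Ω, dotF a z.rep ≠ 0} with hK₀
  set Kc := closure K₀ with hKc
  have hKsub : Kc ⊆ Metric.sphere (0 : Vd d) 1 := by
    refine closure_minimal ?_ Metric.isClosed_sphere
    intro a ha
    simpa [Metric.mem_sphere, dist_zero_right] using ha.1
  have hKcomp : IsCompact Kc := by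
    exact (isCompact_sphere (0 : Vd d) 1).of_isClosed_subset isClosed_closure hKsub
  have hKne : ∀ a ∈ Kc, dotF a w.rep ≠ 0 := by
    intro a ha
    have hanorm : ‖a‖ = 1 := by simpa [dist_zero_right] using hKsub ha
    have hane : a ≠ 0 := by
      intro h; rw [h] at hanorm; simp at hanorm
    refine dotF_ne_zero_of_mem_closure hΩopen hw hane ?_
    refine closure_mono ?_ ha
    intro b hb
    exact hb.2
  have hcont : ContinuousOn
      (fun a : Vd d => ‖dotF a v.rep‖ / ‖dotF a w.rep‖) Kc := by
    apply ContinuousOn.div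
    · exact (continuous_norm.comp (continuous_dotF v.rep)).continuousOn
    · exact (continuous_norm.comp (continuous_dotF w.rep)).continuousOn
    · intro a ha
      simpa using hKne a ha
  obtain ⟨C, hC⟩ := hKcomp.exists_bound_of_continuousOn hcont
  refine ⟨max C 1, le_max_right _ _, ?_⟩
  intro ψ hψ hψΩ
  set a : Vd d := fun i => ψ (Pi.single i 1) with haa
  have hψa : ∀ u : Vd d, ψ u = dotF a u := fun u => dual_eq_dotF ψ u
  have hane : a ≠ 0 := by
    intro h
    apply hψ
    refine LinearMap.ext fun u => ?_
    rw [hψa u, h]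
    simp [dotF]
  have hnorm : ‖a‖ ≠ 0 := norm_ne_zero_iff.2 hane
  set a' : Vd d := ((‖a‖⁻¹ : ℝ) : ℂ) • a with ha'
  have ha'dot : ∀ u : Vd d, dotF a' u = ((‖a‖⁻¹ : ℝ) : ℂ) * dotF a u := fun u =>
    dotF_smul_left _ _ _
  have ha'mem : a' ∈ K₀ := by
    constructor
    · rw [ha', norm_smul]
      simp [hnorm]
    · intro z hz
      rw [ha'dot]
      refine mul_ne_zero ?_ ?_
      · simpa using hnorm
      · rw [← hψa]; exact hψΩ z hz
  have ha'Kc : a' ∈ Kc := subset_closure ha'mem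
  have hwne : ‖dotF a' w.rep‖ ≠ 0 := by
    simpa using hKne a' ha'Kc
  have hwpos : 0 < ‖dotF a' w.rep‖ :=
    lt_of_le_of_ne (norm_nonneg _) (Ne.symm hwne)
  have hratio : ‖dotF a' v.rep‖ / ‖dotF a' w.rep‖ ≤ max C 1 := by
    have := hC a' ha'Kc
    calc ‖dotF a' v.rep‖ / ‖dotF a' w.rep‖
        ≤ ‖‖dotF a' v.rep‖ / ‖dotF a' w.rep‖‖ := le_abs_self _
      _ ≤ C := this
      _ ≤ max C 1 := le_max_left _ _
  have hkey : ‖dotF a' v.rep‖ ≤ max C 1 * ‖dotF a' w.rep‖ :=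
    (div_le_iff₀ hwpos).1 hratio
  have habs : ∀ u : Vd d, ‖dotF a' u‖ = ‖a‖⁻¹ * ‖dotF a u‖ := by
    intro u
    rw [ha'dot, norm_mul]
    simp [Complex.norm_real, abs_of_nonneg (inv_nonneg.2 (norm_nonneg a))]
  rw [hψa, hψa]
  have h1 := hkey
  rw [habs, habs] at h1
  have hinvpos : 0 < ‖a‖⁻¹ := inv_pos.2 (lt_of_le_of_ne (norm_nonneg a) (Ne.symm hnorm))
  have hmm : ∀ X : ℝ, ‖a‖ * (‖a‖⁻¹ * X) = X := by
    intro X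
    field_simp
  calc ‖dotF a v.rep‖
      = ‖a‖ * (‖a‖⁻¹ * ‖dotF a v.rep‖) := (hmm _).symm
    _ ≤ ‖a‖ * (max C 1 * (‖a‖⁻¹ * ‖dotF a w.rep‖)) :=
        mul_le_mul_of_nonneg_left h1 (norm_nonneg a)
    _ = max C 1 * (‖a‖ * (‖a‖⁻¹ * ‖dotF a w.rep‖)) := by ring
    _ = max C 1 * ‖dotF a w.rep‖ := by rw [hmm]

end Aux11

section Aux11b

variable {d : ℕ}

/-- The defining set of the Hilbert distance is bounded above for points of `Ω`. -/
lemma hilbert_set_bddAbove {Ω : Set (CP d)} (hΩopen : IsOpen Ω)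
    {v w : CP d} (hv : v ∈ Ω) (hw : w ∈ Ω) :
    BddAbove {r : ℝ | ∃ f ∈ dualSet Ω, ∃ g ∈ dualSet Ω,
      r = Real.log ((‖f.rep v.rep‖ * ‖g.rep w.rep‖) /
        (‖f.rep w.rep‖ * ‖g.rep v.rep‖))} := by
  obtain ⟨M₁, hM₁1, hM₁⟩ := dual_ratio_bound hΩopen hv hw
  obtain ⟨M₂, hM₂1, hM₂⟩ := dual_ratio_bound hΩopen hw hv
  refine ⟨Real.log (M₁ * M₂), ?_⟩
  rintro r ⟨f, hf, g, hg, rfl⟩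
  have hfv : ‖f.rep v.rep‖ ≠ 0 := by
    simpa using hf v hv
  have hfw : ‖f.rep w.rep‖ ≠ 0 := by
    simpa using hf w hw
  have hgv : ‖g.rep v.rep‖ ≠ 0 := by
    simpa using hg v hv
  have hgw : ‖g.rep w.rep‖ ≠ 0 := by
    simpa using hg w hw
  have hfwpos : 0 < ‖f.rep w.rep‖ :=
    lt_of_le_of_ne (norm_nonneg _) (Ne.symm hfw)
  have hgvpos : 0 < ‖g.rep v.rep‖ :=
    lt_of_le_of_ne (norm_nonneg _) (Ne.symm hgv)
  have hfvpos : 0 < ‖f.rep v.rep‖ :=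
    lt_of_le_of_ne (norm_nonneg _) (Ne.symm hfv)
  have hgwpos : 0 < ‖g.rep w.rep‖ :=
    lt_of_le_of_ne (norm_nonneg _) (Ne.symm hgw)
  have h1 : ‖f.rep v.rep‖ ≤ M₁ * ‖f.rep w.rep‖ :=
    hM₁ f.rep f.rep_nonzero hf
  have h2 : ‖g.rep w.rep‖ ≤ M₂ * ‖g.rep v.rep‖ :=
    hM₂ g.rep g.rep_nonzero hg
  have hApos : 0 < (‖f.rep v.rep‖ * ‖g.rep w.rep‖) /
      (‖f.rep w.rep‖ * ‖g.rep v.rep‖) :=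
    div_pos (mul_pos hfvpos hgwpos) (mul_pos hfwpos hgvpos)
  refine Real.log_le_log hApos ?_
  rw [div_le_iff₀ (mul_pos hfwpos hgvpos)]
  calc ‖f.rep v.rep‖ * ‖g.rep w.rep‖
      ≤ (M₁ * ‖f.rep w.rep‖) * (M₂ * ‖g.rep v.rep‖) := by
        exact mul_le_mul h1 h2 (norm_nonneg _)
          (mul_nonneg (le_trans zero_le_one hM₁1) (norm_nonneg _))
    _ = M₁ * M₂ * (‖f.rep w.rep‖ * ‖g.rep v.rep‖) := by ring

/-- The scale-invariant function `z ↦ |ψ ẑ| / ‖ẑ‖` on projective space. -/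
def pabs (ψ : Module.Dual ℂ (Vd d)) : CP d → ℝ :=
  Projectivization.lift
    (fun u : {v : Vd d // v ≠ 0} => ‖ψ u.1‖ / ‖u.1‖)
    (by
      rintro ⟨a, ha⟩ ⟨b, hb⟩ t h
      simp only at h
      subst h
      have ht : t ≠ 0 := by
        intro h; apply ha; simp [h]
      simp only [map_smul, smul_eq_mul, norm_mul, norm_smul]
      rw [mul_div_mul_left _ _ (by simpa using ht)])

lemma pabs_rep (ψ : Module.Dual ℂ (Vd d)) (z : CP d) :
    pabs ψ z = ‖ψ z.rep‖ / ‖z.rep‖ := by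
  conv_lhs => rw [← z.mk_rep]
  rw [pabs, Projectivization.lift_mk]

lemma continuous_pabs (ψ : Module.Dual ℂ (Vd d)) : Continuous (pabs ψ) := by
  have hψc : Continuous ψ := ψ.continuous_of_finiteDimensional
  have hc : Continuous (fun u : {v : Vd d // v ≠ 0} => ‖ψ u.1‖ / ‖u.1‖) := by
    refine Continuous.div ?_ ?_ ?_
    · exact continuous_norm.comp (hψc.comp continuous_subtype_val)
    · exact continuous_norm.comp continuous_subtype_val
    · intro u
      exact norm_ne_zero_iff.2 u.2
  delta pabs Projectivization.lift
  exact hc.quotient_lift _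

/-- A `d`-dimensional subspace of `ℂ^{d+1}` is the kernel of a nonzero functional. -/
lemma hyperplane_functional {W : Submodule ℂ (Vd d)} (hW : Module.finrank ℂ W = d) :
    ∃ ψ : Module.Dual ℂ (Vd d), ψ ≠ 0 ∧ ∀ z : CP d, z ∈ projSet W ↔ ψ z.rep = 0 := by
  have hdim : Module.finrank ℂ (Vd d) = d + 1 := by
    simp [Module.finrank_pi]
  have hWlt : W < ⊤ := by
    rw [lt_top_iff_ne_top]
    intro h
    rw [h, finrank_top, hdim] at hW
    omega
  obtain ⟨ψ, hψ0, hψmap⟩ := Submodule.exists_dual_map_eq_bot_of_lt_top hWlt inferInstance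
  have hle : W ≤ LinearMap.ker ψ := by
    intro u hu
    rw [LinearMap.mem_ker]
    have : ψ u ∈ W.map ψ := ⟨u, hu, rfl⟩
    rw [hψmap] at this
    simpa using this
  have hker : W = LinearMap.ker ψ := by
    refine Submodule.eq_of_le_of_finrank_eq hle ?_
    have h1 : Module.finrank ℂ (LinearMap.ker ψ) + 1 = Module.finrank ℂ (Vd d) :=
      Module.Dual.finrank_ker_add_one_of_ne_zero hψ0
    rw [hdim] at h1
    omega
  refine ⟨ψ, hψ0, fun z => ?_⟩
  rw [projSet, Set.mem_setOf_eq, Projectivization.submodule_eq, hker,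
    Submodule.span_singleton_le_iff_mem, LinearMap.mem_ker]

end Aux11b

/-- Boundary behavior of the Hilbert metric: boundedly-apart sequences
converging to boundary points have common complex tangent hyperplanes. -/
theorem statement_11 {d : ℕ} (Ω : Set (CP d)) (hΩopen : IsOpen Ω)
    (hlc : LinearlyConvex Ω) (hproper : IsProperDomain Ω)
    (p q : ℕ → CP d) (x y : CP d) (R : ℝ) (hR : 0 < R)
    (hp : ∀ n, p n ∈ Ω) (hq : ∀ n, q n ∈ Ω)
    (hx : x ∈ frontier Ω) (hy : y ∈ frontier Ω)
    (hplim : Filter.Tendsto p Filter.atTop (nhds x))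
    (hqlim : Filter.Tendsto q Filter.atTop (nhds y))
    (hdist : ∀ n, hilbertDist Ω (p n) (q n) < R) :
    ∀ H : Set (CP d), IsProjHyperplane H → x ∈ H → H ∩ Ω = ∅ → y ∈ H := by
  intro H hH hxH hHdisj
  by_contra hyH
  obtain ⟨W, hWrank, rfl⟩ := hH
  obtain ⟨φ, hφ0, hφiff⟩ := hyperplane_functional hWrank
  have hφx : φ x.rep = 0 := (hφiff x).1 hxH
  have hφy : φ y.rep ≠ 0 := fun h => hyH ((hφiff y).2 h)
  have hφΩ : ∀ z ∈ Ω, φ z.rep ≠ 0 := by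
    intro z hz h
    have hmem : z ∈ projSet W ∩ Ω := ⟨(hφiff z).2 h, hz⟩
    rw [hHdisj] at hmem
    exact hmem
  have hxnot : x ∉ Ω := by
    rw [hΩopen.frontier_eq] at hx
    exact hx.2
  -- Step 1: there is a functional nonvanishing on Ω and at x
  have hg0 : ∃ g₀ : Module.Dual ℂ (Vd d), (∀ z ∈ Ω, g₀ z.rep ≠ 0) ∧ g₀ x.rep ≠ 0 := by
    by_contra hcon
    push_neg at hcon
    set p₀ := p 0 with hp₀def
    have hp₀ : p₀ ∈ Ω := hp 0
    have hzt : ∀ (t : ℂ) (h : p₀.rep + t • x.rep ≠ 0),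
        Projectivization.mk ℂ (p₀.rep + t • x.rep) h ∈ Ω := by
      intro t h
      by_contra hznot
      obtain ⟨H', hH', hzH', hdisj'⟩ := hlc _ ⟨Set.mem_univ _, hznot⟩
      obtain ⟨W', hW'rank, rfl⟩ := hH'
      obtain ⟨ψ, hψ0, hψiff⟩ := hyperplane_functional hW'rank
      have hψΩ : ∀ z ∈ Ω, ψ z.rep ≠ 0 := by
        intro z hz hzero
        have hmem : z ∈ projSet W' ∩ Ω := ⟨(hψiff z).2 hzero, hz⟩
        rw [hdisj'] at hmem
        exact hmem
      have hψx : ψ x.rep = 0 := hcon ψ hψΩ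
      have hψw : ψ (p₀.rep + t • x.rep) = 0 := by
        have h1 : ψ (Projectivization.mk ℂ _ h).rep = 0 := (hψiff _).1 hzH'
        obtain ⟨c, hc⟩ := Projectivization.exists_smul_eq_mk_rep ℂ _ h
        rw [← hc, Units.smul_def, map_smul, smul_eq_mul] at h1
        rcases mul_eq_zero.1 h1 with h2 | h2
        · exact absurd h2 c.ne_zero
        · exact h2
      have hψp₀ : ψ p₀.rep = 0 := by
        rw [map_add, map_smul, hψx, smul_zero, add_zero] at hψw
        exact hψw
      exact hψΩ p₀ hp₀ hψp₀
    have hxp₀ne : x ≠ p₀ := fun hh => hxnot (hh ▸ hp₀)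
    have hindep : LinearIndependent ℂ ![p₀.rep, x.rep] := by
      rw [LinearIndependent.pair_iff' p₀.rep_nonzero]
      intro c hc
      apply hxp₀ne
      have hmk : Projectivization.mk ℂ x.rep x.rep_nonzero =
          Projectivization.mk ℂ p₀.rep p₀.rep_nonzero := by
        rw [Projectivization.mk_eq_mk_iff']
        exact ⟨c, hc⟩
      simpa [Projectivization.mk_rep] using hmk
    set W₂ := Submodule.span ℂ ({p₀.rep, x.rep} : Set (Vd d)) with hW₂
    have hrange : Set.range ![p₀.rep, x.rep] = {p₀.rep, x.rep} := by
      simp only [Matrix.range_cons, Matrix.range_empty, Set.union_empty,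
        Set.union_singleton]
      exact Set.pair_comm _ _
    have hW₂rank : Module.finrank ℂ W₂ = 2 := by
      rw [hW₂, ← hrange, finrank_span_eq_card hindep]
      simp
    have hline : IsProjLine (projSet W₂) := ⟨W₂, hW₂rank, rfl⟩
    apply hproper _ hline
    intro ζ hζ
    have hζrep : ζ.rep ∈ W₂ := by
      have h2 : ζ.rep ∈ ζ.submodule := by
        rw [Projectivization.submodule_eq]
        exact Submodule.mem_span_singleton_self _
      exact hζ h2
    rw [hW₂] at hζrep
    obtain ⟨α, β, hαβ⟩ := Submodule.mem_span_pair.1 hζrep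
    by_cases hα : α = 0
    · have hζx : ζ = x := by
        conv_lhs => rw [← ζ.mk_rep]
        conv_rhs => rw [← x.mk_rep]
        rw [Projectivization.mk_eq_mk_iff']
        exact ⟨β, by rw [← hαβ, hα]; simp⟩
      rw [hζx]
      exact frontier_subset_closure hx
    · set w := p₀.rep + (α⁻¹ * β) • x.rep with hw
      have hαw : α • w = ζ.rep := by
        rw [hw, smul_add, smul_smul, show α * (α⁻¹ * β) = β by field_simp]
        exact hαβ
      have hwne : w ≠ 0 := by
        intro hh
        apply ζ.rep_nonzero
        rw [← hαw, hh, smul_zero]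
      have hζw : ζ = Projectivization.mk ℂ w hwne := by
        conv_lhs => rw [← ζ.mk_rep]
        rw [Projectivization.mk_eq_mk_iff']
        exact ⟨α, hαw⟩
      rw [hζw]
      exact subset_closure (hzt _ hwne)
  obtain ⟨g₀, hg₀Ω, hg₀x⟩ := hg0
  have hg₀0 : g₀ ≠ 0 := by
    intro hh
    apply hg₀x
    rw [hh]
    simp
  -- Step 2: the cross-ratio sequence tends to infinity
  have habs_pos : ∀ (ψ : Module.Dual ℂ (Vd d)) (z : CP d), ψ z.rep ≠ 0 → 0 < pabs ψ z := by
    intro ψ z hzne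
    rw [pabs_rep]
    exact div_pos (norm_pos_iff.2 hzne) (norm_pos_iff.2 z.rep_nonzero)
  have hF1x : pabs φ x = 0 := by
    rw [pabs_rep, hφx]
    simp
  have hF1y : 0 < pabs φ y := habs_pos φ y hφy
  have hF2x : 0 < pabs g₀ x := habs_pos g₀ x hg₀x
  have hF1p : Filter.Tendsto (fun n => pabs φ (p n)) Filter.atTop (nhds 0) := by
    have h := ((continuous_pabs φ).tendsto x).comp hplim
    rwa [hF1x] at h
  have hF2p : Filter.Tendsto (fun n => pabs g₀ (p n)) Filter.atTop (nhds (pabs g₀ x)) :=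
    ((continuous_pabs g₀).tendsto x).comp hplim
  have hF1q : Filter.Tendsto (fun n => pabs φ (q n)) Filter.atTop (nhds (pabs φ y)) :=
    ((continuous_pabs φ).tendsto y).comp hqlim
  have hF2q : Filter.Tendsto (fun n => pabs g₀ (q n)) Filter.atTop (nhds (pabs g₀ y)) :=
    ((continuous_pabs g₀).tendsto y).comp hqlim
  set r : ℕ → ℝ := fun n =>
    Real.log ((pabs φ (q n) * pabs g₀ (p n)) * (pabs φ (p n) * pabs g₀ (q n))⁻¹) with hr
  have hden_pos : ∀ n, 0 < pabs φ (p n) * pabs g₀ (q n) := fun n =>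
    mul_pos (habs_pos φ (p n) (hφΩ _ (hp n))) (habs_pos g₀ (q n) (hg₀Ω _ (hq n)))
  have hnum : Filter.Tendsto (fun n => pabs φ (q n) * pabs g₀ (p n)) Filter.atTop
      (nhds (pabs φ y * pabs g₀ x)) := hF1q.mul hF2p
  have hnumpos : 0 < pabs φ y * pabs g₀ x := mul_pos hF1y hF2x
  have hden : Filter.Tendsto (fun n => pabs φ (p n) * pabs g₀ (q n)) Filter.atTop (nhds 0) := by
    have h := hF1p.mul hF2q
    simpa using h
  have hden' : Filter.Tendsto (fun n => pabs φ (p n) * pabs g₀ (q n)) Filter.atTop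
      (nhdsWithin 0 (Set.Ioi 0)) :=
    tendsto_nhdsWithin_of_tendsto_nhds_of_eventually_within _ hden
      (Filter.Eventually.of_forall fun n => hden_pos n)
  have hinv : Filter.Tendsto (fun n => (pabs φ (p n) * pabs g₀ (q n))⁻¹) Filter.atTop
      Filter.atTop := tendsto_inv_nhdsGT_zero.comp hden'
  have hprod : Filter.Tendsto
      (fun n => (pabs φ (q n) * pabs g₀ (p n)) * (pabs φ (p n) * pabs g₀ (q n))⁻¹)
      Filter.atTop Filter.atTop := Filter.Tendsto.pos_mul_atTop hnumpos hnum hinv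
  have hrtend : Filter.Tendsto r Filter.atTop Filter.atTop :=
    Real.tendsto_log_atTop.comp hprod
  obtain ⟨n, hn⟩ := (hrtend.eventually_ge_atTop R).exists
  -- Step 3: r n belongs to the Hilbert-distance defining set
  set f : DualP d := Projectivization.mk ℂ g₀ hg₀0 with hf
  set g : DualP d := Projectivization.mk ℂ φ hφ0 with hg
  obtain ⟨c₁, hc₁⟩ := Projectivization.exists_smul_eq_mk_rep ℂ g₀ hg₀0
  obtain ⟨c₂, hc₂⟩ := Projectivization.exists_smul_eq_mk_rep ℂ φ hφ0
  have hfmem : f ∈ dualSet Ω := by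
    intro z hz
    rw [hf, ← hc₁, Units.smul_def, LinearMap.smul_apply, smul_eq_mul]
    exact mul_ne_zero c₁.ne_zero (hg₀Ω z hz)
  have hgmem : g ∈ dualSet Ω := by
    intro z hz
    rw [hg, ← hc₂, Units.smul_def, LinearMap.smul_apply, smul_eq_mul]
    exact mul_ne_zero c₂.ne_zero (hφΩ z hz)
  have e1 : ‖f.rep (p n).rep‖ = ‖(c₁ : ℂ)‖ * ‖g₀ (p n).rep‖ := by
    rw [hf, ← hc₁, Units.smul_def, LinearMap.smul_apply, smul_eq_mul, norm_mul]
  have e2 : ‖f.rep (q n).rep‖ = ‖(c₁ : ℂ)‖ * ‖g₀ (q n).rep‖ := by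
    rw [hf, ← hc₁, Units.smul_def, LinearMap.smul_apply, smul_eq_mul, norm_mul]
  have e3 : ‖g.rep (p n).rep‖ = ‖(c₂ : ℂ)‖ * ‖φ (p n).rep‖ := by
    rw [hg, ← hc₂, Units.smul_def, LinearMap.smul_apply, smul_eq_mul, norm_mul]
  have e4 : ‖g.rep (q n).rep‖ = ‖(c₂ : ℂ)‖ * ‖φ (q n).rep‖ := by
    rw [hg, ← hc₂, Units.smul_def, LinearMap.smul_apply, smul_eq_mul, norm_mul]
  have hc₁ne : ‖(c₁ : ℂ)‖ ≠ 0 := by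
    simpa using c₁.ne_zero
  have hc₂ne : ‖(c₂ : ℂ)‖ ≠ 0 := by
    simpa using c₂.ne_zero
  have hnp : ‖(p n).rep‖ ≠ 0 := norm_ne_zero_iff.2 (p n).rep_nonzero
  have hnq : ‖(q n).rep‖ ≠ 0 := norm_ne_zero_iff.2 (q n).rep_nonzero
  have hφp : ‖φ (p n).rep‖ ≠ 0 := by
    simpa using hφΩ _ (hp n)
  have hg₀q : ‖g₀ (q n).rep‖ ≠ 0 := by
    simpa using hg₀Ω _ (hq n)
  have hval : r n = Real.log ((‖f.rep (p n).rep‖ * ‖g.rep (q n).rep‖) /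
      (‖f.rep (q n).rep‖ * ‖g.rep (p n).rep‖)) := by
    show Real.log ((pabs φ (q n) * pabs g₀ (p n)) * (pabs φ (p n) * pabs g₀ (q n))⁻¹) = _
    congr 1
    rw [e1, e2, e3, e4, pabs_rep, pabs_rep, pabs_rep, pabs_rep]
    field_simp
  have hmemS : r n ∈ {s : ℝ | ∃ f' ∈ dualSet Ω, ∃ g' ∈ dualSet Ω,
      s = Real.log ((‖f'.rep (p n).rep‖ * ‖g'.rep (q n).rep‖) /
        (‖f'.rep (q n).rep‖ * ‖g'.rep (p n).rep‖))} :=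
    ⟨f, hfmem, g, hgmem, hval⟩
  have hle : r n ≤ hilbertDist Ω (p n) (q n) :=
    le_csSup (hilbert_set_bddAbove hΩopen (hp n) (hq n)) hmemS
  have := hdist n
  linarith

end ComplexConvex
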